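/- If A and B are totally ordered sets and the lexicographic products A × ℤ and B × ℤ are order-isomorphic, then A and B are order-isomorphic. -/

import Mathlib

open Set

/-- In `A ×ₗ ℤ`, the interval between two points with the same first coordinate
is finite. -/
lemma lexProdInt_Icc_finite {A : Type*} [LinearOrder A] (a : A) (m m' : ℤ) :
    (Set.Icc (toLex (a, m)) (toLex (a, m'))).Finite := by
  apply Set.Finite.subset ((Set.finite_Icc m m').image (fun n => toLex (a, n)))
  intro p hp
  obtain ⟨x, n⟩ := p
  obtain ⟨h1, h2⟩ := hp
  have h1' : toLex (a, m) ≤ toLex (x, n) := h1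
  have h2' : toLex (x, n) ≤ toLex (a, m') := h2
  rw [Prod.Lex.le_iff] at h1' h2'
  simp only [ofLex_toLex] at h1' h2'
  rcases h1' with h1' | ⟨rfl, h1'⟩
  · rcases h2' with h2' | ⟨h2', -⟩
    · exact absurd (h1'.trans h2') (lt_irrefl _)
    · exact absurd (h2' ▸ h1') (lt_irrefl _)
  · rcases h2' with h2' | ⟨-, h2'⟩
    · exact absurd h2' (lt_irrefl _)
    · exact ⟨n, ⟨h1', h2'⟩, rfl⟩

/-- In `A ×ₗ ℤ`, the interval between two points with distinct first coordinates
is infinite. -/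
lemma lexProdInt_Icc_infinite {A : Type*} [LinearOrder A] {a a' : A} (hlt : a < a')
    (m m' : ℤ) : ¬ (Set.Icc (toLex (a, m)) (toLex (a', m'))).Finite := by
  intro hfin
  have hsub : (fun n : ℕ => toLex (a, m + n)) '' Set.univ ⊆
      Set.Icc (toLex (a, m)) (toLex (a', m')) := by
    rintro _ ⟨n, -, rfl⟩
    refine ⟨?_, ?_⟩
    · rw [Prod.Lex.le_iff]; right
      exact ⟨rfl, le_add_of_nonneg_right (by exact_mod_cast Nat.zero_le n)⟩
    · rw [Prod.Lex.le_iff]; left; exact hlt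
  have hinj : Set.InjOn (fun n : ℕ => toLex (a, m + n)) Set.univ := by
    intro n _ k _ hnk
    have h2 : m + (n : ℤ) = m + (k : ℤ) := congrArg (fun p => (ofLex p).2) hnk
    omega
  have : (Set.univ : Set ℕ).Finite :=
    Set.Finite.of_finite_image (hfin.subset hsub) hinj
  exact Set.infinite_univ this

theorem orderIso_of_lex_prod_int_orderIso
    (A B : Type*) [LinearOrder A] [LinearOrder B]
    (h : Nonempty ((A ×ₗ ℤ) ≃o (B ×ₗ ℤ))) :
    Nonempty (A ≃o B) := by
  obtain ⟨f⟩ := h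
  have htrans : ∀ x y : A ×ₗ ℤ, (Set.Icc x y).Finite ↔ (Set.Icc (f x) (f y)).Finite := by
    intro x y
    rw [← f.image_Icc]
    exact ⟨fun hf => hf.image _, fun hf => Set.Finite.of_finite_image hf f.injective.injOn⟩
  have hfirst : ∀ (a : A) (m m' : ℤ),
      (ofLex (f (toLex (a, m)))).1 = (ofLex (f (toLex (a, m')))).1 := by
    have key : ∀ (a : A) (m m' : ℤ), m ≤ m' →
        (ofLex (f (toLex (a, m)))).1 = (ofLex (f (toLex (a, m')))).1 := by
      intro a m m' hmm
      have hle : f (toLex (a, m)) ≤ f (toLex (a, m')) := by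
        apply f.monotone
        rw [Prod.Lex.le_iff]; right; exact ⟨rfl, hmm⟩
      have hfin : (Set.Icc (f (toLex (a, m))) (f (toLex (a, m')))).Finite :=
        (htrans _ _).mp (lexProdInt_Icc_finite a m m')
      by_contra hne
      have h1 : (ofLex (f (toLex (a, m)))).1 < (ofLex (f (toLex (a, m')))).1 := by
        rcases (Prod.Lex.le_iff).mp hle with h' | ⟨h', -⟩
        · exact h'
        · exact absurd h' hne
      have e1 : f (toLex (a, m)) =
          toLex ((ofLex (f (toLex (a, m)))).1, (ofLex (f (toLex (a, m)))).2) := rfl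
      have e2 : f (toLex (a, m')) =
          toLex ((ofLex (f (toLex (a, m')))).1, (ofLex (f (toLex (a, m')))).2) := rfl
      rw [e1, e2] at hfin
      exact lexProdInt_Icc_infinite h1 _ _ hfin
    intro a m m'
    rcases le_total m m' with hmm | hmm
    · exact key a m m' hmm
    · exact (key a m' m hmm).symm
  have hmono : StrictMono (fun a : A => (ofLex (f (toLex (a, 0)))).1) := by
    intro a a' haa
    have hle : f (toLex (a, 0)) ≤ f (toLex (a', 0)) := by
      apply f.monotone
      rw [Prod.Lex.le_iff]; left; exact haa
    have hle1 : (ofLex (f (toLex (a, 0)))).1 ≤ (ofLex (f (toLex (a', 0)))).1 := by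
      rcases (Prod.Lex.le_iff).mp hle with h' | ⟨h', -⟩
      · exact h'.le
      · exact h'.le
    rcases lt_or_eq_of_le hle1 with h' | h'
    · exact h'
    · exfalso
      have e1 : f (toLex (a, 0)) =
          toLex ((ofLex (f (toLex (a, 0)))).1, (ofLex (f (toLex (a, 0)))).2) := rfl
      have e2 : f (toLex (a', 0)) =
          toLex ((ofLex (f (toLex (a, 0)))).1, (ofLex (f (toLex (a', 0)))).2) := by
        rw [h']; rfl
      have hfin := lexProdInt_Icc_finite (ofLex (f (toLex (a, 0)))).1
        (ofLex (f (toLex (a, 0)))).2 (ofLex (f (toLex (a', 0)))).2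
      rw [← e1, ← e2] at hfin
      exact lexProdInt_Icc_infinite haa 0 0 ((htrans _ _).mpr hfin)
  have hsurj : Function.Surjective (fun a : A => (ofLex (f (toLex (a, 0)))).1) := by
    intro b
    refine ⟨(ofLex (f.symm (toLex (b, 0)))).1, ?_⟩
    have hstep : (ofLex (f (toLex ((ofLex (f.symm (toLex (b, 0)))).1, 0)))).1 =
        (ofLex (f (toLex ((ofLex (f.symm (toLex (b, 0)))).1,
          (ofLex (f.symm (toLex (b, 0)))).2)))).1 :=
      hfirst _ 0 _
    have heta : toLex ((ofLex (f.symm (toLex (b, 0)))).1,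
        (ofLex (f.symm (toLex (b, 0)))).2) = f.symm (toLex (b, 0)) := rfl
    rw [heta, f.apply_symm_apply] at hstep
    exact hstep
  exact ⟨StrictMono.orderIsoOfSurjective _ hmono hsurj⟩
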